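/- For every real M > 1: (1/√M)·artanh(1/√M) − artanh(1/M) > 1/(5·M²), where artanh denotes the inverse hyperbolic tangent. -/

import Mathlib

open Set

private lemma derivA (x : ℝ) (hx0 : (0:ℝ) ≤ x) (hx1 : x < 1) :
    HasDerivAt (fun s : ℝ => Real.log (1+s) - Real.log (1-s) - (2*s + 2*s^3/3 + 2*s^5/5))
      (1/(1+x) + 1/(1-x) - (2 + 2*x^2 + 2*x^4)) x := by
  have h1 : HasDerivAt (fun s : ℝ => Real.log (1+s)) (1/(1+x)) x := by
    have := ((hasDerivAt_id x).const_add 1).log (by simp only [id_eq]; intro h; nlinarith)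
    simpa using this
  have h2 : HasDerivAt (fun s : ℝ => Real.log (1-s)) (-1/(1-x)) x := by
    have := ((hasDerivAt_id x).const_sub 1).log (by simp only [id_eq]; intro h; nlinarith)
    simpa using this
  have h3 : HasDerivAt (fun s : ℝ => 2*s + 2*s^3/3 + 2*s^5/5)
      (2 + 2*x^2 + 2*x^4) x := by
    have p1 : HasDerivAt (fun s : ℝ => s) 1 x := hasDerivAt_id x
    have p3 : HasDerivAt (fun s : ℝ => s^3) (3*x^2) x := by
      simpa using hasDerivAt_pow 3 x
    have p5 : HasDerivAt (fun s : ℝ => s^5) (5*x^4) x := by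
      simpa using hasDerivAt_pow 5 x
    have := ((p1.const_mul 2).add ((p3.const_mul 2).div_const 3)).add
      ((p5.const_mul 2).div_const 5)
    refine this.congr_deriv ?_
    ring
  have := (h1.sub h2).sub h3
  refine this.congr_deriv ?_
  ring

private lemma lemA : ∀ s ∈ Set.Ico (0:ℝ) 1,
    2*s + 2*s^3/3 + 2*s^5/5 ≤ Real.log (1+s) - Real.log (1-s) := by
  set g : ℝ → ℝ := fun s => Real.log (1+s) - Real.log (1-s) - (2*s + 2*s^3/3 + 2*s^5/5) with hg
  have hmono : MonotoneOn g (Set.Ico (0:ℝ) 1) := by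
    apply monotoneOn_of_deriv_nonneg (convex_Ico 0 1)
    · intro x hx
      exact (derivA x hx.1 hx.2).continuousAt.continuousWithinAt
    · intro x hx
      rw [interior_Ico] at hx
      exact (derivA x hx.1.le hx.2).differentiableAt.differentiableWithinAt
    · intro x hx
      rw [interior_Ico] at hx
      rw [(derivA x hx.1.le hx.2).deriv]
      have h1 : (0:ℝ) < 1 + x := by nlinarith [hx.1, hx.2]
      have h2 : (0:ℝ) < 1 - x := by nlinarith [hx.2]
      have key : 1/(1+x) + 1/(1-x) - (2 + 2*x^2 + 2*x^4)
          = 2*x^6/((1+x)*(1-x)) := by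
        field_simp
        ring
      rw [key]
      positivity
  intro s hs
  have h0 : g 0 ≤ g s := hmono (by constructor <;> norm_num) hs hs.1
  simp only [hg] at h0
  norm_num at h0
  linarith

private lemma derivB (x : ℝ) (hx0 : (0:ℝ) ≤ x) (hx1 : x < 1) :
    HasDerivAt (fun s : ℝ => (1+s)*Real.log (1+s) + (1-s)*Real.log (1-s)
        - (s^2 + s^4/6 + s^6/15))
      (Real.log (1+x) - Real.log (1-x) - (2*x + 2*x^3/3 + 2*x^5/5)) x := by
  have e1 : HasDerivAt (fun s : ℝ => (1:ℝ)+s) 1 x := by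
    simpa using (hasDerivAt_id x).const_add 1
  have e2 : HasDerivAt (fun s : ℝ => (1:ℝ)-s) (-1) x := by
    simpa using (hasDerivAt_id x).const_sub 1
  have h1 : HasDerivAt (fun s : ℝ => Real.log (1+s)) (1/(1+x)) x :=
    by simpa using e1.log (by intro h; nlinarith)
  have h2 : HasDerivAt (fun s : ℝ => Real.log (1-s)) (-1/(1-x)) x :=
    by simpa using e2.log (by intro h; nlinarith)
  have m1 := e1.mul h1
  have m2 := e2.mul h2
  have p2 : HasDerivAt (fun s : ℝ => s^2) (2*x) x := by simpa using hasDerivAt_pow 2 x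
  have p4 : HasDerivAt (fun s : ℝ => s^4) (4*x^3) x := by simpa using hasDerivAt_pow 4 x
  have p6 : HasDerivAt (fun s : ℝ => s^6) (6*x^5) x := by simpa using hasDerivAt_pow 6 x
  have hpoly := (p2.add (p4.div_const 6)).add (p6.div_const 15)
  have := (m1.add m2).sub hpoly
  refine this.congr_deriv ?_
  have hA : (0:ℝ) < 1 + x := by nlinarith
  have hB : (0:ℝ) < 1 - x := by nlinarith
  field_simp
  ring

private lemma lemB : ∀ s ∈ Set.Ico (0:ℝ) 1,
    s^2 + s^4/6 + s^6/15 ≤ (1+s)*Real.log (1+s) + (1-s)*Real.log (1-s) := by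
  set g : ℝ → ℝ := fun s => (1+s)*Real.log (1+s) + (1-s)*Real.log (1-s)
      - (s^2 + s^4/6 + s^6/15) with hg
  have hmono : MonotoneOn g (Set.Ico (0:ℝ) 1) := by
    apply monotoneOn_of_deriv_nonneg (convex_Ico 0 1)
    · intro x hx
      exact (derivB x hx.1 hx.2).continuousAt.continuousWithinAt
    · intro x hx
      rw [interior_Ico] at hx
      exact (derivB x hx.1.le hx.2).differentiableAt.differentiableWithinAt
    · intro x hx
      rw [interior_Ico] at hx
      rw [(derivB x hx.1.le hx.2).deriv]
      have := lemA x ⟨hx.1.le, hx.2⟩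
      linarith
  intro s hs
  have h0 : g 0 ≤ g s := hmono (by constructor <;> norm_num) hs hs.1
  simp only [hg] at h0
  norm_num at h0
  linarith

private lemma derivC (x : ℝ) (hx0 : (0:ℝ) ≤ x) :
    HasDerivAt (fun y : ℝ => (y - y^2/2 + y^3/3) - Real.log (1+y))
      ((1 - x + x^2) - 1/(1+x)) x := by
  have h1 : HasDerivAt (fun y : ℝ => Real.log (1+y)) (1/(1+x)) x := by
    have := ((hasDerivAt_id x).const_add 1).log (by simp only [id_eq]; intro h; nlinarith)
    simpa using this
  have p2 : HasDerivAt (fun y : ℝ => y^2) (2*x) x := by simpa using hasDerivAt_pow 2 x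
  have p3 : HasDerivAt (fun y : ℝ => y^3) (3*x^2) x := by simpa using hasDerivAt_pow 3 x
  have hpoly := ((hasDerivAt_id x).sub (p2.div_const 2)).add (p3.div_const 3)
  have := hpoly.sub h1
  refine this.congr_deriv ?_
  ring

private lemma lemC : ∀ x ∈ Set.Ici (0:ℝ), Real.log (1+x) ≤ x - x^2/2 + x^3/3 := by
  set g : ℝ → ℝ := fun y => (y - y^2/2 + y^3/3) - Real.log (1+y) with hg
  have hmono : MonotoneOn g (Set.Ici (0:ℝ)) := by
    apply monotoneOn_of_deriv_nonneg (convex_Ici 0)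
    · intro x hx
      exact (derivC x hx).continuousAt.continuousWithinAt
    · intro x hx
      rw [interior_Ici] at hx
      exact (derivC x hx.le).differentiableAt.differentiableWithinAt
    · intro x hx
      rw [interior_Ici, mem_Ioi] at hx
      rw [(derivC x hx.le).deriv]
      have h1 : (0:ℝ) < 1 + x := by nlinarith
      have key : (1 - x + x^2) - 1/(1+x) = x^3/(1+x) := by field_simp; ring
      rw [key]; positivity
  intro x hx
  have h0 : g 0 ≤ g x := hmono (by norm_num) hx hx
  simp only [hg] at h0
  norm_num at h0
  linarith

/-- The inverse hyperbolic tangent, `artanh x = ½ ln((1+x)/(1−x))`. -/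
noncomputable def artanh (x : ℝ) : ℝ := Real.log ((1 + x) / (1 - x)) / 2

/-- The key estimate in the comparison theorem: for `M > 1`,
`(1/√M)·artanh(1/√M) − artanh(1/M) > 1/(5M²)`. -/
theorem stmt_19 (M : ℝ) (hM : 1 < M) :
    1 / Real.sqrt M * artanh (1 / Real.sqrt M) - artanh (1 / M) > 1 / (5 * M ^ 2) := by
  have hM0 : (0:ℝ) < M := by linarith
  have hsqrt1 : 1 < Real.sqrt M := by
    rw [show (1:ℝ) = Real.sqrt 1 by simp]
    exact Real.sqrt_lt_sqrt (by norm_num) hM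
  set s : ℝ := 1 / Real.sqrt M with hs
  have hs0 : 0 < s := by positivity
  have hs1 : s < 1 := by
    rw [hs, div_lt_one (by linarith)]; exact hsqrt1
  have hsq : s^2 = 1 / M := by
    rw [hs, div_pow, one_pow, Real.sq_sqrt hM0.le]
  have hrhs : 1 / (5 * M ^ 2) = s^4 / 5 := by
    have : s^4 = (s^2)^2 := by ring
    rw [this, hsq]
    field_simp
  have h1p : (0:ℝ) < 1 + s := by linarith
  have h1m : (0:ℝ) < 1 - s := by linarith
  have h1ps : (0:ℝ) < 1 + s^2 := by positivity
  have h1ms : (0:ℝ) < 1 - s^2 := by nlinarith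
  -- rewrite artanh
  have e1 : artanh s = (Real.log (1+s) - Real.log (1-s)) / 2 := by
    rw [artanh, Real.log_div h1p.ne' h1m.ne']
  have e2 : artanh (1/M) = (Real.log (1+s^2) - (Real.log (1-s) + Real.log (1+s))) / 2 := by
    rw [artanh, ← hsq, Real.log_div h1ps.ne' h1ms.ne',
      show (1 - s^2) = (1-s)*(1+s) by ring, Real.log_mul h1m.ne' h1p.ne']
  have hB := lemB s ⟨hs0.le, hs1⟩
  have hC := lemC (s^2) (mem_Ici.mpr (by positivity))
  rw [hrhs, e1, e2]
  nlinarith [sq_nonneg s, pow_pos hs0 4, pow_pos hs0 6, mul_pos (pow_pos hs0 4) (sub_pos.mpr (by nlinarith : s^2 < 1))]
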